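/- Let m ≥ 1 and n ≥ 2 be integers. Then Δ_{m,n}(m/(n−1)) = 1 − n. Moreover, there exists ε > 0 such that for all real h with 0 < h < ε, Δ_{m,n}(m/(n−1) + h) = (1 − n) − (gcd(m, n−1) − 1). -/

import Mathlib

open Finset
open scoped Classical

/-- The ranking table `τ^{m,n}_ξ(i,j) = #{(s,t) ∈ [m]×[n] : s + tξ ≤ i + jξ}`. -/
noncomputable def tau (m n : ℕ) (ξ : ℝ) (i j : ℕ) : ℕ :=
  ((Finset.Icc 1 m ×ˢ Finset.Icc 1 n).filter
    (fun p => (p.1 : ℝ) + (p.2 : ℝ) * ξ ≤ (i : ℝ) + (j : ℝ) * ξ)).card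

/-- `Δ_{m,n}(ξ) = τ^{m,n}_ξ(m,1) − τ^{m,n}_ξ(1,n)` as an integer. -/
noncomputable def Delta (m n : ℕ) (ξ : ℝ) : ℤ :=
  (tau m n ξ m 1 : ℤ) - (tau m n ξ 1 n : ℤ)

lemma card_filter_le (m : ℕ) (c : ℝ) :
    ((Finset.Icc 1 m).filter (fun s : ℕ => (s : ℝ) ≤ c)).card = min m ⌊c⌋₊ := by
  have hset : ((Finset.Icc 1 m).filter (fun s : ℕ => (s : ℝ) ≤ c)) = Finset.Icc 1 (min m ⌊c⌋₊) := by
    ext s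
    simp only [mem_filter, mem_Icc, le_min_iff]
    constructor
    · rintro ⟨⟨h1, h2⟩, h3⟩
      exact ⟨h1, h2, (Nat.le_floor_iff' (by omega)).mpr h3⟩
    · rintro ⟨h1, h2, h3⟩
      exact ⟨⟨h1, h2⟩, (Nat.le_floor_iff' (by omega)).mp h3⟩
  rw [hset, Nat.card_Icc]
  omega

lemma tau_sum (m n : ℕ) (ξ : ℝ) (i j : ℕ) :
    tau m n ξ i j = ∑ t ∈ Finset.Icc 1 n, min m ⌊(i : ℝ) + ((j : ℝ) - (t : ℝ)) * ξ⌋₊ := by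
  unfold tau
  rw [Finset.card_filter, Finset.sum_product, Finset.sum_comm]
  refine Finset.sum_congr rfl fun t _ => ?_
  rw [← card_filter_le m ((i : ℝ) + ((j : ℝ) - (t : ℝ)) * ξ), Finset.card_filter]
  refine Finset.sum_congr rfl fun s _ => ?_
  refine if_congr ?_ rfl rfl
  constructor <;> intro H <;> nlinarith [H]

lemma Delta_sum (m n : ℕ) (ξ : ℝ) :
    Delta m n ξ = ∑ t ∈ Finset.Icc 1 n,
      ((min m ⌊(m : ℝ) + ((1 : ℝ) - (t : ℝ)) * ξ⌋₊ : ℤ)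
        - (min m ⌊(1 : ℝ) + ((n : ℝ) - (t : ℝ)) * ξ⌋₊ : ℤ)) := by
  rw [Delta, tau_sum m n ξ m 1, tau_sum m n ξ 1 n, Nat.cast_sum, Nat.cast_sum,
    ← Finset.sum_sub_distrib]
  refine Finset.sum_congr rfl fun t _ => ?_
  norm_num

lemma val_eq (m n t : ℕ) (hn : 2 ≤ n) (ht1 : 1 ≤ t) (htn : t ≤ n) (h : ℝ) :
    ((m : ℝ) + ((1 : ℝ) - (t : ℝ)) * ((m : ℝ) / ((n : ℝ) - 1) + h)
      = (↑(m * (n - t) / (n - 1)) : ℝ) + (↑(m * (n - t) % (n - 1)) : ℝ) / (↑(n - 1) : ℝ)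
        - ((t : ℝ) - 1) * h)
    ∧ ((1 : ℝ) + ((n : ℝ) - (t : ℝ)) * ((m : ℝ) / ((n : ℝ) - 1) + h)
      = (↑(m * (n - t) / (n - 1)) : ℝ) + (↑(m * (n - t) % (n - 1)) : ℝ) / (↑(n - 1) : ℝ)
        + 1 + (↑(n - t) : ℝ) * h) := by
  have hγR : ((n - 1 : ℕ) : ℝ) = (n : ℝ) - 1 := by
    rw [Nat.cast_sub (by omega)]; norm_num
  have hkR : ((n - t : ℕ) : ℝ) = (n : ℝ) - (t : ℝ) := by
    rw [Nat.cast_sub htn]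
  have hqr : (n - 1) * (m * (n - t) / (n - 1)) + m * (n - t) % (n - 1) = m * (n - t) :=
    Nat.div_add_mod _ _
  have hqrR : ((n - 1 : ℕ) : ℝ) * (↑(m * (n - t) / (n - 1)) : ℝ)
      + (↑(m * (n - t) % (n - 1)) : ℝ) = (m : ℝ) * (↑(n - t) : ℝ) := by
    exact_mod_cast congrArg (Nat.cast : ℕ → ℝ) hqr
  have hγ0 : ((n - 1 : ℕ) : ℝ) ≠ 0 := by
    rw [hγR]; intro hc
    have : (n : ℝ) = 1 := by linarith
    have : n = 1 := by exact_mod_cast this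
    omega
  have hγ0' : (n : ℝ) - 1 ≠ 0 := by rw [← hγR]; exact hγ0
  constructor
  · rw [← hγR]
    field_simp
    nlinarith [hqrR, hkR, hγR]
  · rw [← hγR]
    field_simp
    linear_combination (-1 : ℝ) * hqrR - ((m : ℝ) + ((n - 1 : ℕ) : ℝ) * h) * hkR

lemma term_one (m n : ℕ) (hm : 1 ≤ m) (ξ : ℝ)
    (hξ1 : (m : ℝ) + 1 ≤ 1 + ((n : ℝ) - 1) * ξ) (hξ2 : 1 + ((n : ℝ) - 1) * ξ < (m : ℝ) + 2) :
    (min m ⌊(m : ℝ) + ((1 : ℝ) - (1 : ℝ)) * ξ⌋₊ : ℤ)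
      - (min m ⌊(1 : ℝ) + ((n : ℝ) - (1 : ℝ)) * ξ⌋₊ : ℤ) = 0 := by
  have hA : ⌊(m : ℝ) + ((1 : ℝ) - (1 : ℝ)) * ξ⌋₊ = m := by
    norm_num
  have hB : ⌊(1 : ℝ) + ((n : ℝ) - (1 : ℝ)) * ξ⌋₊ = m + 1 := by
    rw [Nat.floor_eq_iff (by linarith)]
    push_cast
    constructor <;> linarith
  rw [hA, hB, min_self, min_eq_left (by omega)]
  ring

lemma dvd_iff_aux (m n : ℕ) (hm : 1 ≤ m) (hn : 2 ≤ n) (k : ℕ) :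
    (n - 1) ∣ m * k ↔ ((n - 1) / Nat.gcd m (n - 1)) ∣ k := by
  set d := Nat.gcd m (n - 1) with hd
  have hdpos : 0 < d := Nat.gcd_pos_of_pos_left _ hm
  have hdm : d ∣ m := Nat.gcd_dvd_left _ _
  have hdn : d ∣ (n - 1) := Nat.gcd_dvd_right _ _
  have hed : (n - 1) / d * d = n - 1 := Nat.div_mul_cancel hdn
  have hmd : m / d * d = m := Nat.div_mul_cancel hdm
  have hcop : Nat.Coprime (m / d) ((n - 1) / d) := Nat.coprime_div_gcd_div_gcd hdpos
  constructor
  · rintro hdvd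
    have h1 : d * ((n - 1) / d) ∣ d * (m / d * k) := by
      rw [show d * ((n - 1) / d) = n - 1 by rw [mul_comm]; exact hed,
        show d * (m / d * k) = m * k by rw [← mul_assoc, mul_comm d (m / d), hmd]]
      exact hdvd
    have h2 : (n - 1) / d ∣ m / d * k := (Nat.mul_dvd_mul_iff_left hdpos).mp h1
    exact Nat.Coprime.dvd_of_dvd_mul_left hcop.symm h2
  · rintro ⟨c, rfl⟩
    refine ⟨m / d * c, ?_⟩
    calc m * ((n - 1) / d * c) = (m / d * d) * ((n - 1) / d * c) := by rw [hmd]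
      _ = ((n - 1) / d * d) * (m / d * c) := by ring
      _ = (n - 1) * (m / d * c) := by rw [hed]

lemma card_aux (m n : ℕ) (hm : 1 ≤ m) (hn : 2 ≤ n) :
    (((Finset.Icc 2 n)).filter (fun t => (n - 1) ∣ m * (n - t) ∧ t ≠ n)).card
      = Nat.gcd m (n - 1) - 1 := by
  set d := Nat.gcd m (n - 1) with hd
  have hdpos : 0 < d := Nat.gcd_pos_of_pos_left _ hm
  have hdn : d ∣ (n - 1) := Nat.gcd_dvd_right _ _
  set e := (n - 1) / d with he
  have hed : e * d = n - 1 := Nat.div_mul_cancel hdn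
  have hepos : 0 < e :=
    Nat.div_pos (Nat.le_of_dvd (by omega) hdn) hdpos
  have hbij : (((Finset.Icc 2 n)).filter (fun t => (n - 1) ∣ m * (n - t) ∧ t ≠ n)).card
      = (((Finset.Icc 1 (n - 2))).filter (fun k => (n - 1) ∣ m * k)).card := by
    apply Finset.card_bij (fun t _ => n - t)
    · intro t ht
      simp only [mem_filter, mem_Icc] at ht ⊢
      exact ⟨⟨by omega, by omega⟩, ht.2.1⟩
    · intro t1 h1 t2 h2 hEq
      simp only [mem_filter, mem_Icc] at h1 h2
      omega
    · intro k hk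
      simp only [mem_filter, mem_Icc] at hk
      refine ⟨n - k, ?_, by omega⟩
      simp only [mem_filter, mem_Icc]
      refine ⟨⟨by omega, by omega⟩, ?_, by omega⟩
      rw [show n - (n - k) = k by omega]
      exact hk.2
  rw [hbij]
  have hfc : (((Finset.Icc 1 (n - 2))).filter (fun k => (n - 1) ∣ m * k))
      = (((Finset.Ioc 0 (n - 2))).filter (fun k => e ∣ k)) := by
    rw [show Finset.Icc 1 (n - 2) = Finset.Ioc 0 (n - 2) by rfl]
    apply Finset.filter_congr
    intro k _
    exact dvd_iff_aux m n hm hn k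
  rw [hfc]
  have := Nat.Ioc_filter_dvd_card_eq_div (n - 2) e
  rw [this]
  -- (n-2)/e = d - 1
  have hsplit : n - 2 = e * (d - 1) + (e - 1) := by
    have h1 : e * (d - 1) + e = e * d := by
      rw [← Nat.mul_succ, Nat.succ_eq_add_one, Nat.sub_add_cancel hdpos]
    omega
  rw [hsplit, Nat.mul_add_div hepos, Nat.div_eq_of_lt (by omega)]
  omega

lemma qm_aux (m n t : ℕ) (hm : 1 ≤ m) (hn : 2 ≤ n) (ht2 : 2 ≤ t) (htn : t ≤ n) :
    m * (n - t) / (n - 1) + 1 ≤ m := by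
  have hlt : m * (n - t) < m * (n - 1) :=
    mul_lt_mul_of_pos_left (by omega) (by omega)
  have := (Nat.div_lt_iff_lt_mul (show 0 < n - 1 by omega)).mpr hlt
  omega

lemma term_mid0 (m n t : ℕ) (hm : 1 ≤ m) (hn : 2 ≤ n) (ht2 : 2 ≤ t) (htn : t ≤ n) :
    (min m ⌊(m : ℝ) + ((1 : ℝ) - (t : ℝ)) * ((m : ℝ) / ((n : ℝ) - 1))⌋₊ : ℤ)
      - (min m ⌊(1 : ℝ) + ((n : ℝ) - (t : ℝ)) * ((m : ℝ) / ((n : ℝ) - 1))⌋₊ : ℤ) = -1 := by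
  obtain ⟨hA, hB⟩ := val_eq m n t hn (by omega) htn 0
  rw [add_zero] at hA hB
  rw [mul_zero, sub_zero] at hA
  rw [mul_zero, add_zero] at hB
  set q := m * (n - t) / (n - 1) with hq
  set r := m * (n - t) % (n - 1) with hr
  have hγpos : (0 : ℝ) < ((n - 1 : ℕ) : ℝ) := by
    have : 0 < n - 1 := by omega
    exact_mod_cast this
  have hrlt : r < n - 1 := Nat.mod_lt _ (by omega)
  have hfrac0 : (0 : ℝ) ≤ (r : ℝ) / ((n - 1 : ℕ) : ℝ) := by positivity
  have hfrac1 : (r : ℝ) / ((n - 1 : ℕ) : ℝ) < 1 := by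
    rw [div_lt_one hγpos]
    exact_mod_cast hrlt
  have hfA : ⌊(m : ℝ) + ((1 : ℝ) - (t : ℝ)) * ((m : ℝ) / ((n : ℝ) - 1))⌋₊ = q := by
    rw [hA, Nat.floor_eq_iff (by positivity)]
    constructor <;> simp <;> linarith
  have hfB : ⌊(1 : ℝ) + ((n : ℝ) - (t : ℝ)) * ((m : ℝ) / ((n : ℝ) - 1))⌋₊ = q + 1 := by
    rw [hB, Nat.floor_eq_iff (by positivity)]
    push_cast
    constructor <;> linarith
  have hqm : q + 1 ≤ m := qm_aux m n t hm hn ht2 htn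
  rw [hfA, hfB,
    min_eq_right (show ((q : ℕ) : ℤ) ≤ (m : ℤ) by exact_mod_cast (by omega : q ≤ m)),
    min_eq_right (show ((q + 1 : ℕ) : ℤ) ≤ (m : ℤ) by exact_mod_cast hqm)]
  push_cast
  ring

lemma term_mid (m n t : ℕ) (hm : 1 ≤ m) (hn : 2 ≤ n) (ht2 : 2 ≤ t) (htn : t ≤ n)
    (h : ℝ) (h0 : 0 < h) (hh : h < 1 / (n : ℝ) ^ 2) :
    (min m ⌊(m : ℝ) + ((1 : ℝ) - (t : ℝ)) * ((m : ℝ) / ((n : ℝ) - 1) + h)⌋₊ : ℤ)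
      - (min m ⌊(1 : ℝ) + ((n : ℝ) - (t : ℝ)) * ((m : ℝ) / ((n : ℝ) - 1) + h)⌋₊ : ℤ)
      = -1 - (if (n - 1) ∣ m * (n - t) ∧ t ≠ n then 1 else 0) := by
  obtain ⟨hA, hB⟩ := val_eq m n t hn (by omega) htn h
  set q := m * (n - t) / (n - 1) with hq
  set r := m * (n - t) % (n - 1) with hr
  have hqr : (n - 1) * q + r = m * (n - t) := Nat.div_add_mod _ _
  have hγpos : (0 : ℝ) < ((n - 1 : ℕ) : ℝ) := by
    have : 0 < n - 1 := by omega
    exact_mod_cast this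
  have hγR : ((n - 1 : ℕ) : ℝ) = (n : ℝ) - 1 := by
    rw [Nat.cast_sub (by omega)]; norm_num
  have hnR : (2 : ℝ) ≤ (n : ℝ) := by exact_mod_cast hn
  have key : ((n - 1 : ℕ) : ℝ) * h < 1 / ((n - 1 : ℕ) : ℝ) := by
    have h1 : ((n - 1 : ℕ) : ℝ) * h < ((n - 1 : ℕ) : ℝ) * (1 / (n : ℝ) ^ 2) :=
      mul_lt_mul_of_pos_left hh hγpos
    have h2 : ((n - 1 : ℕ) : ℝ) * (1 / (n : ℝ) ^ 2) ≤ 1 / ((n - 1 : ℕ) : ℝ) := by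
      rw [mul_one_div, div_le_div_iff₀ (by positivity) hγpos]
      nlinarith
    linarith
  have hth : ((t : ℝ) - 1) * h ≤ ((n - 1 : ℕ) : ℝ) * h := by
    apply mul_le_mul_of_nonneg_right _ h0.le
    have : (t : ℝ) ≤ (n : ℝ) := by exact_mod_cast htn
    linarith
  have hkh : ((n - t : ℕ) : ℝ) * h ≤ ((n - 1 : ℕ) : ℝ) * h := by
    apply mul_le_mul_of_nonneg_right _ h0.le
    exact_mod_cast (by omega : n - t ≤ n - 1)
  have ht1R : (1 : ℝ) ≤ (t : ℝ) - 1 := by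
    have : (2 : ℝ) ≤ (t : ℝ) := by exact_mod_cast ht2
    linarith
  have hthpos : 0 < ((t : ℝ) - 1) * h := mul_pos (by linarith) h0
  have hinv1 : 1 / ((n - 1 : ℕ) : ℝ) ≤ 1 := by
    rw [div_le_one hγpos]
    exact_mod_cast (by omega : 1 ≤ n - 1)
  have hkh0 : (0 : ℝ) ≤ ((n - t : ℕ) : ℝ) * h := by positivity
  rcases Nat.eq_zero_or_pos (n - t) with hk0 | hk1
  · -- t = n
    have htn' : t = n := by omega
    have hq0 : q = 0 := by rw [hq, hk0, Nat.mul_zero, Nat.zero_div]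
    have hr0 : r = 0 := by rw [hr, hk0, Nat.mul_zero, Nat.zero_mod]
    have hfA : ⌊(m : ℝ) + ((1 : ℝ) - (t : ℝ)) * ((m : ℝ) / ((n : ℝ) - 1) + h)⌋₊ = 0 := by
      apply Nat.floor_of_nonpos
      rw [hA, hq0, hr0]
      push_cast
      rw [zero_div]
      linarith
    have hfB : ⌊(1 : ℝ) + ((n : ℝ) - (t : ℝ)) * ((m : ℝ) / ((n : ℝ) - 1) + h)⌋₊ = 1 := by
      rw [hB, hq0, hr0, hk0]
      push_cast
      norm_num
    rw [hfA, hfB, if_neg (by simp [htn'])]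
    push_cast
    rw [min_eq_right (show (0 : ℤ) ≤ (m : ℤ) by positivity),
      min_eq_right (show (1 : ℤ) ≤ (m : ℤ) by exact_mod_cast hm)]
    ring
  · have hkn : t ≠ n := by omega
    have hqm : q + 1 ≤ m := qm_aux m n t hm hn ht2 htn
    have hrlt : r < n - 1 := Nat.mod_lt _ (by omega)
    rcases Nat.eq_zero_or_pos r with hr0 | hr1
    · -- divisible case
      have hdvd : (n - 1) ∣ m * (n - t) := ⟨q, by omega⟩
      have hq1 : 1 ≤ q := by
        rcases Nat.eq_zero_or_pos q with h0 | h0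
        · exfalso
          rw [h0, hr0, Nat.mul_zero, Nat.add_zero] at hqr
          have := Nat.mul_eq_zero.mp hqr.symm
          omega
        · exact h0
      have hq1R : (1 : ℝ) ≤ (q : ℝ) := by exact_mod_cast hq1
      have hA' : (m : ℝ) + ((1 : ℝ) - (t : ℝ)) * ((m : ℝ) / ((n : ℝ) - 1) + h)
          = (q : ℝ) - ((t : ℝ) - 1) * h := by
        rw [hA, hr0]; norm_num
      have hB' : (1 : ℝ) + ((n : ℝ) - (t : ℝ)) * ((m : ℝ) / ((n : ℝ) - 1) + h)
          = (q : ℝ) + 1 + ((n - t : ℕ) : ℝ) * h := by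
        rw [hB, hr0]; norm_num
      have hfA : ⌊(m : ℝ) + ((1 : ℝ) - (t : ℝ)) * ((m : ℝ) / ((n : ℝ) - 1) + h)⌋₊ = q - 1 := by
        rw [hA', Nat.floor_eq_iff (by linarith)]
        rw [Nat.cast_sub hq1]
        push_cast
        constructor <;> linarith
      have hfB : ⌊(1 : ℝ) + ((n : ℝ) - (t : ℝ)) * ((m : ℝ) / ((n : ℝ) - 1) + h)⌋₊ = q + 1 := by
        rw [hB', Nat.floor_eq_iff (by positivity)]
        push_cast
        constructor <;> linarith
      rw [hfA, hfB, if_pos ⟨hdvd, hkn⟩,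
        min_eq_right (show ((q - 1 : ℕ) : ℤ) ≤ (m : ℤ) by exact_mod_cast (by omega : q - 1 ≤ m)),
        min_eq_right (show ((q + 1 : ℕ) : ℤ) ≤ (m : ℤ) by exact_mod_cast hqm)]
      rw [Nat.cast_sub hq1]
      push_cast
      ring
    · -- non-divisible case
      have hndvd : ¬ (n - 1) ∣ m * (n - t) := by
        intro hdvd
        have : r = 0 := by
          rw [hr]
          exact Nat.mod_eq_zero_of_dvd hdvd
        omega
      have hr1R : (1 : ℝ) ≤ (r : ℝ) := by exact_mod_cast hr1
      have hrR : (r : ℝ) + 1 ≤ ((n - 1 : ℕ) : ℝ) := by exact_mod_cast hrlt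
      have hfrac1 : 1 / ((n - 1 : ℕ) : ℝ) ≤ (r : ℝ) / ((n - 1 : ℕ) : ℝ) := by gcongr
      have hfrac2 : (r : ℝ) / ((n - 1 : ℕ) : ℝ) ≤ 1 - 1 / ((n - 1 : ℕ) : ℝ) := by
        have e1 : (r : ℝ) / ((n - 1 : ℕ) : ℝ) ≤ (((n - 1 : ℕ) : ℝ) - 1) / ((n - 1 : ℕ) : ℝ) := by
          gcongr
          linarith
        have e2 : (((n - 1 : ℕ) : ℝ) - 1) / ((n - 1 : ℕ) : ℝ)
            = 1 - 1 / ((n - 1 : ℕ) : ℝ) := by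
          rw [sub_div, div_self hγpos.ne']
        linarith
      have hfrac0 : (0 : ℝ) < (r : ℝ) / ((n - 1 : ℕ) : ℝ) := by positivity
      have hfA : ⌊(m : ℝ) + ((1 : ℝ) - (t : ℝ)) * ((m : ℝ) / ((n : ℝ) - 1) + h)⌋₊ = q := by
        rw [hA, Nat.floor_eq_iff (by linarith [Nat.cast_nonneg (α := ℝ) q])]
        constructor <;> linarith [Nat.cast_nonneg (α := ℝ) q]
      have hfB : ⌊(1 : ℝ) + ((n : ℝ) - (t : ℝ)) * ((m : ℝ) / ((n : ℝ) - 1) + h)⌋₊ = q + 1 := by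
        rw [hB, Nat.floor_eq_iff (by positivity)]
        push_cast
        constructor <;> linarith
      rw [hfA, hfB, if_neg (by intro hc; exact hndvd hc.1),
        min_eq_right (show ((q : ℕ) : ℤ) ≤ (m : ℤ) by exact_mod_cast (by omega : q ≤ m)),
        min_eq_right (show ((q + 1 : ℕ) : ℤ) ≤ (m : ℤ) by exact_mod_cast hqm)]
      push_cast
      ring

/-- `Δ_{m,n}(m/(n−1)) = 1 − n`, and just to the right of `m/(n−1)` the value is
`(1 − n) − (gcd(m,n−1) − 1)`. -/
theorem Delta_at_right_boundary (m n : ℕ) (hm : 1 ≤ m) (hn : 2 ≤ n) :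
    Delta m n ((m : ℝ) / ((n : ℝ) - 1)) = 1 - (n : ℤ) ∧
    ∃ ε : ℝ, 0 < ε ∧ ∀ h : ℝ, 0 < h → h < ε →
      Delta m n ((m : ℝ) / ((n : ℝ) - 1) + h) =
        (1 - (n : ℤ)) - ((Nat.gcd m (n - 1) : ℤ) - 1) := by
  have hIcc : Finset.Icc 1 n = insert 1 (Finset.Icc 2 n) := by
    ext x
    simp only [mem_insert, mem_Icc]
    omega
  have h1notin : (1 : ℕ) ∉ Finset.Icc 2 n := by simp
  have hnR : (2 : ℝ) ≤ (n : ℝ) := by exact_mod_cast hn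
  have hγ0 : (n : ℝ) - 1 ≠ 0 := by intro hc; nlinarith
  have hfield : ((n : ℝ) - 1) * ((m : ℝ) / ((n : ℝ) - 1)) = m := by field_simp
  constructor
  · rw [Delta_sum, hIcc, Finset.sum_insert h1notin,
      Finset.sum_congr rfl (fun t ht =>
        term_mid0 m n t hm hn (mem_Icc.mp ht).1 (mem_Icc.mp ht).2)]
    have h1 := term_one m n hm ((m : ℝ) / ((n : ℝ) - 1))
      (by rw [hfield]; linarith) (by rw [hfield]; linarith)
    simp only [Nat.cast_one] at h1 ⊢
    rw [h1, Finset.sum_const, Nat.card_Icc, nsmul_eq_mul]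
    omega
  · refine ⟨1 / (n : ℝ) ^ 2, by positivity, fun h h0 hh => ?_⟩
    have hn1pos : (0 : ℝ) < (n : ℝ) - 1 := by linarith
    have hsmall : ((n : ℝ) - 1) * h < 1 := by
      have h1 : ((n : ℝ) - 1) * h < ((n : ℝ) - 1) * (1 / (n : ℝ) ^ 2) :=
        mul_lt_mul_of_pos_left hh hn1pos
      have h2 : ((n : ℝ) - 1) * (1 / (n : ℝ) ^ 2) < 1 := by
        rw [mul_one_div, div_lt_one (by positivity)]
        nlinarith
      linarith
    have hex : ((n : ℝ) - 1) * ((m : ℝ) / ((n : ℝ) - 1) + h)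
        = (m : ℝ) + ((n : ℝ) - 1) * h := by
      rw [mul_add, hfield]
    rw [Delta_sum, hIcc, Finset.sum_insert h1notin,
      Finset.sum_congr rfl (fun t ht =>
        term_mid m n t hm hn (mem_Icc.mp ht).1 (mem_Icc.mp ht).2 h h0 hh)]
    have h1 := term_one m n hm ((m : ℝ) / ((n : ℝ) - 1) + h)
      (by rw [hex]; nlinarith [mul_nonneg hn1pos.le h0.le])
      (by rw [hex]; linarith)
    simp only [Nat.cast_one] at h1 ⊢
    rw [h1, Finset.sum_sub_distrib, Finset.sum_const, Nat.card_Icc, nsmul_eq_mul,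
      Finset.sum_boole, card_aux m n hm hn]
    have hd : 1 ≤ Nat.gcd m (n - 1) := Nat.gcd_pos_of_pos_left _ hm
    omega
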